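/- A graph is chordal if and only if it admits a perfect elimination ordering. -/

import Mathlib

open SimpleGraph

/-- A graph is chordal if every cycle of length at least `4` has a chord: an edge
between two vertices of the cycle that is not an edge of the cycle. -/
def Chordal {V : Type} (G : SimpleGraph V) : Prop :=
  ∀ (u : V) (c : G.Walk u u), c.IsCycle → 4 ≤ c.length →
    ∃ a b : V, a ∈ c.support ∧ b ∈ c.support ∧ G.Adj a b ∧ s(a, b) ∉ c.edges

section Aux

variable {V : Type} {G : SimpleGraph V}

lemma exists_min_nat {α : Sort*} (P : α → Prop) (f : α → ℕ) (h : ∃ x, P x) :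
    ∃ x, P x ∧ ∀ y, P y → f x ≤ f y := by
  classical
  obtain ⟨x₀, hx₀⟩ := h
  have hex : ∃ k, ∃ x, P x ∧ f x = k := ⟨f x₀, x₀, hx₀, rfl⟩
  obtain ⟨x, hx, hfx⟩ := Nat.find_spec hex
  refine ⟨x, hx, fun y hy => ?_⟩
  rw [hfx]
  by_contra h'
  exact Nat.find_min hex (by omega : f y < Nat.find hex) ⟨y, hy, rfl⟩

lemma getVert_eq_support_get {u v : V} (p : G.Walk u v) :
    ∀ (i : ℕ) (h : i < p.support.length), p.support.get ⟨i, h⟩ = p.getVert i := by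
  induction p with
  | nil =>
    intro i h
    simp only [SimpleGraph.Walk.support_nil, List.length_singleton] at h
    have : i = 0 := by omega
    subst this
    simp [SimpleGraph.Walk.getVert]
  | cons hadj q ih =>
    intro i h
    cases i with
    | zero => simp [SimpleGraph.Walk.support_cons]
    | succ j =>
      simp only [SimpleGraph.Walk.support_cons, List.get_cons_succ,
        SimpleGraph.Walk.getVert_cons_succ]
      exact ih j (by simpa [SimpleGraph.Walk.length_support] using h)

lemma edge_mem_iff_getVert {u v x y : V} (p : G.Walk u v) :
    s(x, y) ∈ p.edges ↔ ∃ i, (s(p.getVert i, p.getVert (i+1)) = s(x, y)) ∧ i < p.length := by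
  rw [← SimpleGraph.Walk.mem_edges_toSubgraph, SimpleGraph.Subgraph.mem_edgeSet,
    SimpleGraph.Walk.toSubgraph_adj_iff]

lemma edge_getVert_mem {u v : V} (p : G.Walk u v) {i : ℕ} (hi : i < p.length) :
    s(p.getVert i, p.getVert (i+1)) ∈ p.edges := by
  rw [← SimpleGraph.Walk.mem_edges_toSubgraph, SimpleGraph.Subgraph.mem_edgeSet]
  exact p.toSubgraph_adj_getVert hi


lemma getVert_eq_support_getElem {u v : V} (p : G.Walk u v) :
    ∀ (i : ℕ) (h : i < p.support.length), p.support[i] = p.getVert i := by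
  induction p with
  | nil =>
    intro i h
    simp only [SimpleGraph.Walk.support_nil, List.length_singleton] at h
    have : i = 0 := by omega
    subst this
    simp [SimpleGraph.Walk.getVert]
  | cons hadj q ih =>
    intro i h
    cases i with
    | zero => simp [SimpleGraph.Walk.support_cons]
    | succ j =>
      simp only [SimpleGraph.Walk.support_cons, List.getElem_cons_succ,
        SimpleGraph.Walk.getVert_cons_succ]
      exact ih j (by simpa [SimpleGraph.Walk.length_support] using h)

lemma cycle_getVert_injOn {m : V} {c : G.Walk m m} (hc : c.IsCycle)
    {i j : ℕ} (hi1 : 1 ≤ i) (hi2 : i ≤ c.length) (hj1 : 1 ≤ j) (hj2 : j ≤ c.length)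
    (h : c.getVert i = c.getVert j) : i = j := by
  have hnd := hc.support_nodup
  have hslen : c.support.length = c.length + 1 := c.length_support
  have htlen : c.support.tail.length = c.length := by
    rw [List.length_tail, hslen]; omega
  have h1 : ∀ (k : ℕ) (hk : k - 1 < c.support.tail.length) (hk2 : 1 ≤ k),
      c.support.tail[k-1] = c.getVert k := by
    intro k hk hk2
    rw [List.getElem_tail, getVert_eq_support_getElem]
    congr 1
    omega
  have hi' : i - 1 < c.support.tail.length := by omega
  have hj' : j - 1 < c.support.tail.length := by omega
  have key := (List.Nodup.getElem_inj_iff hnd (i := i-1) (hi := hi') (j := j-1) (hj := hj'))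
  rw [h1 i hi' hi1, h1 j hj' hj1] at key
  have := key.mp h
  omega


lemma length_rotate {m u : V} [DecidableEq V] (c : G.Walk u u) (h : m ∈ c.support) :
    (c.rotate m h).length = c.length := by
  have h1 := (c.rotate_edges m h).perm.length_eq
  rwa [SimpleGraph.Walk.length_edges, SimpleGraph.Walk.length_edges] at h1

lemma mem_support_rotate_iff {m u z : V} [DecidableEq V] (c : G.Walk u u) (h : m ∈ c.support) :
    z ∈ (c.rotate m h).support ↔ z ∈ c.support := by
  rw [SimpleGraph.Walk.rotate, SimpleGraph.Walk.mem_support_append_iff]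
  conv_rhs => rw [← c.take_spec h]
  rw [SimpleGraph.Walk.mem_support_append_iff]
  tauto


lemma chordal_of_peo (r : V ↪ ℕ)
    (hr : ∀ u v w : V, G.Adj u v → G.Adj u w → r u < r v → r u < r w → v ≠ w → G.Adj v w) :
    Chordal G := by
  classical
  intro u c hc hlen
  obtain ⟨m, hm, hmin⟩ := exists_min_nat (fun z => z ∈ c.support) (fun z => r z)
    ⟨u, c.start_mem_support⟩
  set c' := c.rotate m hm with hc'def
  have hc'cyc : c'.IsCycle := hc.rotate hm
  have hnlen : c'.length = c.length := length_rotate c hm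
  set n := c'.length with hn
  have hn4 : 4 ≤ n := by omega
  set x := c'.getVert 1 with hx
  set y := c'.getVert (n-1) with hy
  have hgetn : c'.getVert n = m := c'.getVert_length
  have hget0 : c'.getVert 0 = m := c'.getVert_zero
  have hadj_mx : G.Adj m x := by
    have := c'.adj_getVert_succ (i := 0) (by omega)
    rwa [hget0] at this
  have hadj_ym : G.Adj y m := by
    have := c'.adj_getVert_succ (i := n-1) (by omega)
    have h2 : n - 1 + 1 = n := by omega
    rwa [h2, hgetn] at this
  have hxsupp : x ∈ c'.support :=
    SimpleGraph.Walk.mem_support_iff_exists_getVert.mpr ⟨1, rfl, by omega⟩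
  have hysupp : y ∈ c'.support :=
    SimpleGraph.Walk.mem_support_iff_exists_getVert.mpr ⟨n-1, rfl, by omega⟩
  have hinj := fun {i j : ℕ} (hi1 : 1 ≤ i) (hi2 : i ≤ n) (hj1 : 1 ≤ j) (hj2 : j ≤ n)
    (h : c'.getVert i = c'.getVert j) => cycle_getVert_injOn hc'cyc hi1 hi2 hj1 hj2 h
  have hxm : x ≠ m := by
    intro h
    rw [← hgetn] at h
    have := hinj (by omega) (by omega) (by omega) (le_refl n) h
    omega
  have hym : y ≠ m := by
    intro h
    rw [← hgetn] at h
    have := hinj (by omega) (by omega) (by omega) (le_refl n) h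
    omega
  have hxy : x ≠ y := by
    intro h
    have := hinj (by omega) (by omega) (by omega) (by omega) h
    omega
  have hminr : ∀ z, z ∈ c'.support → r m ≤ r z := by
    intro z hz
    exact hmin z ((mem_support_rotate_iff c hm).mp hz)
  have hltx : r m < r x :=
    lt_of_le_of_ne (hminr x hxsupp) (fun h => hxm (r.injective h.symm))
  have hlty : r m < r y :=
    lt_of_le_of_ne (hminr y hysupp) (fun h => hym (r.injective h.symm))
  have hadjxy : G.Adj x y := hr m x y hadj_mx hadj_ym.symm hltx hlty hxy
  have hnotedge : s(x, y) ∉ c'.edges := by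
    intro hmem
    rw [edge_mem_iff_getVert] at hmem
    obtain ⟨i, hieq, hilt⟩ := hmem
    rw [Sym2.eq_iff] at hieq
    rcases hieq with ⟨h1, h2⟩ | ⟨h1, h2⟩
    · have hi0 : i ≠ 0 := by
        intro h; rw [h, hget0] at h1; exact hxm h1.symm
      have : i = 1 := hinj (by omega) (by omega) (by omega) (by omega) (h1.trans hx)
      subst this
      have : (2 : ℕ) = n - 1 := hinj (by omega) (by omega) (by omega) (by omega) (h2.trans hy)
      omega
    · have hi0 : i ≠ 0 := by
        intro h; rw [h, hget0] at h1; exact hym h1.symm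
      have : i = n - 1 := hinj (by omega) (by omega) (by omega) (by omega) (h1.trans hy)
      subst this
      have h3 : n - 1 + 1 = n := by omega
      rw [h3, hgetn] at h2
      exact hxm h2.symm
  refine ⟨x, y, (mem_support_rotate_iff c hm).mp hxsupp,
    (mem_support_rotate_iff c hm).mp hysupp, hadjxy, ?_⟩
  intro hmem
  exact hnotedge ((c.rotate_edges m hm).perm.mem_iff.mpr hmem)


def Reach (G : SimpleGraph V) (S : Finset V) (a x : V) : Prop :=
  ∃ p : G.Walk a x, ∀ z ∈ p.support, z ∉ S

lemma Reach.symm {S : Finset V} {a x : V} (h : Reach G S a x) : Reach G S x a := by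
  obtain ⟨p, hp⟩ := h
  exact ⟨p.reverse, by simpa [SimpleGraph.Walk.support_reverse] using hp⟩

lemma Reach.trans {S : Finset V} {a x y : V} (h1 : Reach G S a x) (h2 : Reach G S x y) :
    Reach G S a y := by
  obtain ⟨p, hp⟩ := h1
  obtain ⟨q, hq⟩ := h2
  refine ⟨p.append q, fun z hz => ?_⟩
  rcases (SimpleGraph.Walk.mem_support_append_iff p q).mp hz with h | h
  · exact hp z h
  · exact hq z h

lemma Reach.of_walk_support {S : Finset V} {a u w z : V} (hu : Reach G S a u)
    (p : G.Walk u w) (hp : ∀ t ∈ p.support, t ∉ S) (hz : z ∈ p.support) : Reach G S a z := by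
  classical
  exact hu.trans ⟨p.takeUntil z hz, fun t ht => hp t (p.support_takeUntil_subset hz ht)⟩


lemma Reach.not_mem_right {S : Finset V} {a x : V} (h : Reach G S a x) : x ∉ S := by
  obtain ⟨p, hp⟩ := h
  exact hp x p.end_mem_support

lemma Reach.adj_extend {S : Finset V} {a x y : V} (h : Reach G S a x) (hadj : G.Adj x y)
    (hy : y ∉ S) : Reach G S a y := by
  obtain ⟨p, hp⟩ := h
  refine ⟨p.append (hadj.toWalk), fun z hz => ?_⟩
  rcases (SimpleGraph.Walk.mem_support_append_iff _ _).mp hz with h | h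
  · exact hp z h
  · rcases (SimpleGraph.Walk.mem_support_iff _).mp h with rfl | h
    · exact hp _ p.end_mem_support
    · simp only [SimpleGraph.Walk.support_cons, SimpleGraph.Walk.support_nil] at h
      simp only [List.tail_cons, List.mem_singleton] at h
      subst h; exact hy


/-- a minimal-length path from `x` to `y` through the component of `c` -/
lemma side_path {S : Finset V} {x y wx wy c : V} (hxy : x ≠ y) (hnadj : ¬ G.Adj x y)
    (hAdjx : G.Adj x wx) (hAdjy : G.Adj y wy)
    (hwx : Reach G S c wx) (hwy : Reach G S c wy) :
    ∃ p : G.Walk x y, p.IsPath ∧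
      (∀ z ∈ p.support, z ∈ ({z | z = x ∨ z = y ∨ Reach G S c z} : Set V)) ∧
      (∀ q : G.Walk x y, (∀ z ∈ q.support, z ∈ ({z | z = x ∨ z = y ∨ Reach G S c z} : Set V)) →
        p.length ≤ q.length) ∧ 2 ≤ p.length := by
  classical
  set T : Set V := {z | z = x ∨ z = y ∨ Reach G S c z} with hT
  obtain ⟨p1, hp1⟩ := hwx.symm
  obtain ⟨p2, hp2⟩ := hwy
  have hr0 : ∀ z ∈ (p1.append p2).support, z ∉ S := by
    intro z hz
    rcases (SimpleGraph.Walk.mem_support_append_iff _ _).mp hz with h | h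
    · exact hp1 z h
    · exact hp2 z h
  have hreach_all : ∀ z ∈ (p1.append p2).support, Reach G S c z := by
    intro z hz
    exact Reach.of_walk_support hwx (p1.append p2) hr0 hz
  set full : G.Walk x y := SimpleGraph.Walk.cons hAdjx ((p1.append p2).concat hAdjy.symm)
    with hfull
  have hfullT : ∀ z ∈ full.support, z ∈ T := by
    intro z hz
    rw [hfull, SimpleGraph.Walk.support_cons] at hz
    rcases List.mem_cons.mp hz with rfl | hz
    · exact Or.inl rfl
    · rw [SimpleGraph.Walk.support_concat] at hz
      rw [List.mem_append, List.mem_singleton] at hz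
      rcases hz with hz | rfl
      · exact Or.inr (Or.inr (hreach_all z hz))
      · exact Or.inr (Or.inl rfl)
  obtain ⟨p0, hp0T, hp0min⟩ := exists_min_nat (fun q : G.Walk x y => ∀ z ∈ q.support, z ∈ T)
    (fun q => q.length) ⟨full, hfullT⟩
  refine ⟨p0.bypass, p0.bypass_isPath, fun z hz => hp0T z (p0.support_bypass_subset hz),
    fun q hq => le_trans (p0.length_bypass_le) (hp0min q hq), ?_⟩
  have h0 : p0.bypass.length ≠ 0 := fun h =>
    hxy (SimpleGraph.Walk.eq_of_length_eq_zero h)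
  have h1 : p0.bypass.length ≠ 1 := by
    intro h
    apply hnadj
    have := p0.bypass.adj_getVert_succ (i := 0) (by omega)
    rwa [SimpleGraph.Walk.getVert_zero, zero_add, ← h, SimpleGraph.Walk.getVert_length] at this
  omega


/-- a-b separator -/
def GSep (G : SimpleGraph V) (a b : V) (S : Finset V) : Prop :=
  a ∉ S ∧ b ∉ S ∧ ¬ Reach G S a b

lemma GSep.symm {a b : V} {S : Finset V} (h : GSep G a b S) : GSep G b a S := by
  obtain ⟨h1, h2, h3⟩ := h
  refine ⟨h2, h1, fun hr => h3 ?_⟩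
  obtain ⟨p, hp⟩ := hr
  exact ⟨p.reverse, by simpa [SimpleGraph.Walk.support_reverse] using hp⟩

lemma sep_exists [Fintype V] [DecidableEq V] {a b : V} (hab : a ≠ b) (hnadj : ¬ G.Adj a b) :
    GSep G a b (Finset.univ \ {a, b}) := by
  refine ⟨by simp, by simp, ?_⟩
  rintro ⟨p, hp⟩
  have hsupp : ∀ z ∈ p.support, z = a ∨ z = b := by
    intro z hz
    have := hp z hz
    by_contra hcon
    push_neg at hcon
    simp [hcon.1, hcon.2] at this
  cases p with
  | nil => exact hab rfl
  | cons h q =>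
    rename_i v
    have hv : v ∈ (SimpleGraph.Walk.cons h q).support := by
      rw [SimpleGraph.Walk.support_cons]
      exact List.mem_cons_of_mem _ q.start_mem_support
    rcases hsupp v hv with h1 | h1
    · subst h1; exact G.irrefl h
    · subst h1; exact hnadj h

/-- every vertex of a minimal separator has a neighbour in the `a`-side component -/
lemma sep_nbr [DecidableEq V] {a b : V} {S : Finset V} (hS : GSep G a b S)
    (hmin : ∀ T : Finset V, GSep G a b T → S.card ≤ T.card) {x : V} (hx : x ∈ S) :
    ∃ w, G.Adj x w ∧ Reach G S a w := by
  obtain ⟨ha, hb, hreach⟩ := hS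
  set T := S.erase x with hT
  have hTcard : T.card < S.card := Finset.card_erase_lt_of_mem hx
  have hTsep : ¬ GSep G a b T := fun h => absurd (hmin T h) (by omega)
  have haT : a ∉ T := fun h => ha (Finset.mem_of_mem_erase h)
  have hbT : b ∉ T := fun h => hb (Finset.mem_of_mem_erase h)
  have hreachT : Reach G T a b := by
    by_contra h
    exact hTsep ⟨haT, hbT, h⟩
  obtain ⟨p, hp⟩ := hreachT
  have hxsupp : x ∈ p.support := by
    by_contra hxs
    refine hreach ⟨p, fun z hz hzS => ?_⟩
    have : z ∈ T := Finset.mem_erase.mpr ⟨fun h => hxs (h ▸ hz), hzS⟩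
    exact hp z hz this
  set q := p.takeUntil x hxsupp with hq
  have hqcount : q.support.count x = 1 := p.count_support_takeUntil_eq_one hxsupp
  have hxa : x ≠ a := fun h => ha (h ▸ hx)
  obtain ⟨w, h', q'', hq''⟩ := SimpleGraph.Walk.exists_eq_cons_of_ne hxa q.reverse
  have hq''supp : ∀ z ∈ q''.support, z ∉ S := by
    intro z hz
    have hz1 : z ∈ q.support := by
      have : z ∈ q.reverse.support := by
        rw [hq'', SimpleGraph.Walk.support_cons]; exact List.mem_cons_of_mem _ hz
      rwa [SimpleGraph.Walk.support_reverse, List.mem_reverse] at this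
    have hz2 : z ∉ T := hp z (p.support_takeUntil_subset hxsupp hz1)
    have hzx : z ≠ x := by
      intro h
      subst h
      have : q.reverse.support.count z = 1 := by
        rwa [SimpleGraph.Walk.support_reverse, List.count_reverse]
      rw [hq'', SimpleGraph.Walk.support_cons, List.count_cons_self] at this
      have : q''.support.count z = 0 := by omega
      exact absurd (List.count_pos_iff.mpr hz) (by omega)
    intro hzS
    exact hz2 (Finset.mem_erase.mpr ⟨hzx, hzS⟩)
  refine ⟨w, h', ⟨q''.reverse, ?_⟩⟩
  intro z hz
  rw [SimpleGraph.Walk.support_reverse, List.mem_reverse] at hz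
  exact hq''supp z hz



lemma split3 [DecidableEq V] {x y a' b' : V} (p : G.Walk x y) (ha : a' ∈ p.support)
    (hb : b' ∈ p.support) :
    (∃ (q1 : G.Walk x a') (q2 : G.Walk a' b') (q3 : G.Walk b' y),
        p = q1.append (q2.append q3)) ∨
    (∃ (q1 : G.Walk x b') (q2 : G.Walk b' a') (q3 : G.Walk a' y),
        p = q1.append (q2.append q3)) := by
  set t := p.takeUntil a' ha with ht
  set d := p.dropUntil a' ha with hd
  have hspec : t.append d = p := p.take_spec ha
  by_cases hb' : b' ∈ d.support
  · left
    exact ⟨t, d.takeUntil b' hb', d.dropUntil b' hb', by rw [d.take_spec hb', hspec]⟩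
  · right
    have hbt : b' ∈ t.support := by
      rw [← hspec] at hb
      rcases (SimpleGraph.Walk.mem_support_append_iff t d).mp hb with h | h
      · exact h
      · exact absurd h hb'
    refine ⟨t.takeUntil b' hbt, t.dropUntil b' hbt, d, ?_⟩
    rw [SimpleGraph.Walk.append_assoc, t.take_spec hbt, hspec]

lemma shortcut_core {x y a' b' : V} (T : Set V) (q1 : G.Walk x a') (q2 : G.Walk a' b')
    (q3 : G.Walk b' y) (hadj : G.Adj a' b')
    (hsup : ∀ z ∈ (q1.append (q2.append q3)).support, z ∈ T)
    (hmin : ∀ q : G.Walk x y, (∀ z ∈ q.support, z ∈ T) →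
      (q1.append (q2.append q3)).length ≤ q.length) :
    s(a', b') ∈ (q1.append (q2.append q3)).edges := by
  set p := q1.append (q2.append q3) with hp
  have hl2 : q2.length ≠ 0 := fun h => hadj.ne (SimpleGraph.Walk.eq_of_length_eq_zero h)
  by_cases hl21 : q2.length = 1
  · have hmem : s(a', b') ∈ q2.edges := by
      have := edge_getVert_mem q2 (i := 0) (by omega)
      rwa [SimpleGraph.Walk.getVert_zero, zero_add, ← hl21, SimpleGraph.Walk.getVert_length]
        at this
    rw [hp, SimpleGraph.Walk.edges_append, SimpleGraph.Walk.edges_append]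
    simp [hmem]
  · exfalso
    set q' := q1.append (hadj.toWalk.append q3) with hq'
    have hsup' : ∀ z ∈ q'.support, z ∈ T := by
      intro z hz
      rcases (SimpleGraph.Walk.mem_support_append_iff _ _).mp hz with h | h
      · refine hsup z ?_
        rw [hp, SimpleGraph.Walk.mem_support_append_iff]
        exact Or.inl h
      · rcases (SimpleGraph.Walk.mem_support_append_iff _ _).mp h with h | h
        · rcases (SimpleGraph.Walk.mem_support_iff _).mp h with rfl | h
          · refine hsup _ ?_
            rw [hp]
            rw [SimpleGraph.Walk.mem_support_append_iff,
              SimpleGraph.Walk.mem_support_append_iff]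
            exact Or.inr (Or.inl q2.start_mem_support)
          · simp only [SimpleGraph.Walk.support_cons, SimpleGraph.Walk.support_nil,
              List.tail_cons, List.mem_singleton] at h
            subst h
            refine hsup _ ?_
            rw [hp, SimpleGraph.Walk.mem_support_append_iff,
              SimpleGraph.Walk.mem_support_append_iff]
            exact Or.inr (Or.inr q3.start_mem_support)
        · refine hsup _ ?_
          rw [hp, SimpleGraph.Walk.mem_support_append_iff,
            SimpleGraph.Walk.mem_support_append_iff]
          exact Or.inr (Or.inr h)
    have hlen : q'.length < p.length := by
      rw [hq', hp]
      simp only [SimpleGraph.Walk.length_append]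
      have : hadj.toWalk.length = 1 := rfl
      omega
    exact absurd (hmin q' hsup') (by omega)

lemma chord_in_min_walk [DecidableEq V] {x y a' b' : V} (T : Set V) (p : G.Walk x y)
    (hsup : ∀ z ∈ p.support, z ∈ T)
    (hmin : ∀ q : G.Walk x y, (∀ z ∈ q.support, z ∈ T) → p.length ≤ q.length)
    (hadj : G.Adj a' b') (ha : a' ∈ p.support) (hb : b' ∈ p.support) :
    s(a', b') ∈ p.edges := by
  rcases split3 p ha hb with ⟨q1, q2, q3, rfl⟩ | ⟨q1, q2, q3, rfl⟩
  · exact shortcut_core T q1 q2 q3 hadj hsup hmin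
  · have := shortcut_core T q1 q2 q3 hadj.symm hsup hmin
    rwa [Sym2.eq_swap] at this


lemma sep_clique [DecidableEq V] (hG : Chordal G) {a b : V} {S : Finset V}
    (hS : GSep G a b S) (hmin : ∀ T : Finset V, GSep G a b T → S.card ≤ T.card) :
    ∀ x ∈ S, ∀ y ∈ S, x ≠ y → G.Adj x y := by
  intro x hx y hy hxy
  by_contra hnadj
  have hAB : ∀ z, Reach G S a z → Reach G S b z → False := fun z h1 h2 =>
    hS.2.2 (h1.trans h2.symm)
  obtain ⟨wx, hwx_adj, hwx⟩ := sep_nbr hS hmin hx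
  obtain ⟨wy, hwy_adj, hwy⟩ := sep_nbr hS hmin hy
  have hS' : GSep G b a S := hS.symm
  have hmin' : ∀ T : Finset V, GSep G b a T → S.card ≤ T.card := fun T h => hmin T h.symm
  obtain ⟨wx', hwx'_adj, hwx'⟩ := sep_nbr hS' hmin' hx
  obtain ⟨wy', hwy'_adj, hwy'⟩ := sep_nbr hS' hmin' hy
  obtain ⟨pA, hApath, hAsup, hAmin, hAlen⟩ := side_path hxy hnadj hwx_adj hwy_adj hwx hwy
  obtain ⟨pB, hBpath, hBsup, hBmin, hBlen⟩ := side_path hxy hnadj hwx'_adj hwy'_adj hwx' hwy'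
  -- characterizations
  have hxS : x ∈ S := hx
  have hyS : y ∈ S := hy
  have hmemA : ∀ z ∈ pA.support, z = x ∨ z = y ∨ Reach G S a z := fun z hz => hAsup z hz
  have hmemB : ∀ z ∈ pB.support, z = x ∨ z = y ∨ Reach G S b z := fun z hz => hBsup z hz
  set c := pA.append pB.reverse with hc
  have hsupc : ∀ z, z ∈ c.support → z ∈ pA.support ∨ z ∈ pB.support := by
    intro z hz
    rcases (SimpleGraph.Walk.mem_support_append_iff _ _).mp hz with h | h
    · exact Or.inl h
    · right; rwa [SimpleGraph.Walk.support_reverse, List.mem_reverse] at h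
  have hmemboth : ∀ z, z ∈ pA.support → z ∈ pB.support → z = x ∨ z = y := by
    intro z hzA hzB
    rcases hmemA z hzA with h | h | h
    · exact Or.inl h
    · exact Or.inr h
    · rcases hmemB z hzB with h' | h' | h'
      · exact Or.inl h'
      · exact Or.inr h'
      · exact absurd h' (fun h'' => hAB z h h'')
  -- the cycle
  have hclen : c.length = pA.length + pB.length := by
    rw [hc, SimpleGraph.Walk.length_append, SimpleGraph.Walk.length_reverse]
  have hccyc : c.IsCycle := by
    refine ⟨⟨⟨?_⟩, ?_⟩, ?_⟩
    · -- edges nodup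
      rw [hc, SimpleGraph.Walk.edges_append]
      refine List.Nodup.append hApath.isTrail.edges_nodup ?_ ?_
      · rw [SimpleGraph.Walk.edges_reverse]
        exact List.nodup_reverse.mpr hBpath.isTrail.edges_nodup
      · intro e heA heB
        rw [SimpleGraph.Walk.edges_reverse, List.mem_reverse] at heB
        induction e with
        | _ u1 u2 =>
          have hu1A := pA.fst_mem_support_of_mem_edges heA
          have hu2A := pA.snd_mem_support_of_mem_edges heA
          have hu1B := pB.fst_mem_support_of_mem_edges heB
          have hu2B := pB.snd_mem_support_of_mem_edges heB
          have hne : u1 ≠ u2 := (pA.adj_of_mem_edges heA).ne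
          rcases hmemboth u1 hu1A hu1B with rfl | rfl
          · rcases hmemboth u2 hu2A hu2B with rfl | rfl
            · exact hne rfl
            · exact hnadj (pA.adj_of_mem_edges heA)
          · rcases hmemboth u2 hu2A hu2B with rfl | rfl
            · exact hnadj (pA.adj_of_mem_edges heA).symm
            · exact hne rfl
    · -- nonnil
      intro h
      have : c.length = 0 := by rw [h]; rfl
      omega
    · -- support tail nodup
      rw [hc, SimpleGraph.Walk.tail_support_append]
      refine List.Nodup.append (hApath.support_nodup.tail) ((hBpath.reverse).support_nodup.tail) ?_
      intro z hzA hzB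
      have hzA' : z ∈ pA.support := List.mem_of_mem_tail hzA
      have hzB' : z ∈ pB.support := by
        have : z ∈ pB.reverse.support := List.mem_of_mem_tail hzB
        rwa [SimpleGraph.Walk.support_reverse, List.mem_reverse] at this
      rcases hmemboth z hzA' hzB' with rfl | rfl
      · have := hApath.support_nodup
        rw [pA.support_eq_cons] at this
        exact (List.nodup_cons.mp this).1 hzA
      · have := hBpath.reverse.support_nodup
        rw [pB.reverse.support_eq_cons] at this
        exact (List.nodup_cons.mp this).1 hzB
  obtain ⟨a', b', ha', hb', hadj', hnedge⟩ := hG x c hccyc (by omega)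
  have hedgeA : ∀ e ∈ pA.edges, e ∈ c.edges := by
    intro e he
    rw [hc, SimpleGraph.Walk.edges_append, List.mem_append]
    exact Or.inl he
  have hedgeB : ∀ e ∈ pB.edges, e ∈ c.edges := by
    intro e he
    rw [hc, SimpleGraph.Walk.edges_append, List.mem_append, SimpleGraph.Walk.edges_reverse,
      List.mem_reverse]
    exact Or.inr he
  -- case analysis on chord position
  have hbothA : a' ∈ pA.support → b' ∈ pA.support → False := by
    intro h1 h2
    exact hnedge (hedgeA _ (chord_in_min_walk _ pA hAsup hAmin hadj' h1 h2))
  have hbothB : a' ∈ pB.support → b' ∈ pB.support → False := by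
    intro h1 h2
    exact hnedge (hedgeB _ (chord_in_min_walk _ pB hBsup hBmin hadj' h1 h2))
  have hcross : ∀ u1 u2, G.Adj u1 u2 → u1 ∈ pA.support → u1 ∉ pB.support →
      u2 ∈ pB.support → u2 ∉ pA.support → False := by
    intro u1 u2 hadj h1A h1B h2B h2A
    have hr1 : Reach G S a u1 := by
      rcases hmemA u1 h1A with rfl | rfl | h
      · exact absurd pB.start_mem_support h1B
      · exact absurd pB.end_mem_support h1B
      · exact h
    have hr2 : Reach G S b u2 := by
      rcases hmemB u2 h2B with rfl | rfl | h
      · exact absurd pA.start_mem_support h2A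
      · exact absurd pA.end_mem_support h2A
      · exact h
    exact hAB u2 (hr1.adj_extend hadj hr2.not_mem_right) hr2
  rcases hsupc a' ha' with h1 | h1 <;> rcases hsupc b' hb' with h2 | h2
  · exact hbothA h1 h2
  · by_cases h3 : a' ∈ pB.support
    · exact hbothB h3 h2
    · by_cases h4 : b' ∈ pA.support
      · exact hbothA h1 h4
      · exact hcross a' b' hadj' h1 h3 h2 h4
  · by_cases h3 : b' ∈ pB.support
    · exact hbothB h1 h3
    · by_cases h4 : a' ∈ pA.support
      · exact hbothA h4 h2
      · exact hcross b' a' hadj'.symm h2 h3 h1 h4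
  · exact hbothB h1 h2


def Simp (G : SimpleGraph V) (v : V) : Prop :=
  ∀ x y, G.Adj v x → G.Adj v y → x ≠ y → G.Adj x y

lemma Reach.refl {S : Finset V} {a : V} (ha : a ∉ S) : Reach G S a a :=
  ⟨SimpleGraph.Walk.nil, by simp [ha]⟩

lemma Chordal.induce (hG : Chordal G) (s : Set V) : Chordal (G.induce s) := by
  intro u c hc hlen
  classical
  let f : G.induce s ↪g G := SimpleGraph.Embedding.induce s
  have hcyc : (c.map f.toHom).IsCycle := hc.map f.injective
  have hlen' : 4 ≤ (c.map f.toHom).length := by rwa [SimpleGraph.Walk.length_map]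
  obtain ⟨a, b, ha, hb, hadj, hedge⟩ := hG _ (c.map f.toHom) hcyc hlen'
  rw [SimpleGraph.Walk.support_map, List.mem_map] at ha hb
  obtain ⟨a', ha', rfl⟩ := ha
  obtain ⟨b', hb', rfl⟩ := hb
  refine ⟨a', b', ha', hb', hadj, fun hmem => hedge ?_⟩
  rw [SimpleGraph.Walk.edges_map, List.mem_map]
  exact ⟨s(a', b'), hmem, rfl⟩

lemma step [Fintype V] [DecidableEq V] {n : ℕ}
    (IH : ∀ (W : Type) [Fintype W] (H : SimpleGraph W), Fintype.card W ≤ n → Chordal H →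
      (∀ x y : W, x ≠ y → H.Adj x y) ∨
      (∃ x y : W, x ≠ y ∧ ¬ H.Adj x y ∧ Simp H x ∧ Simp H y))
    (hG : Chordal G) (hcard : Fintype.card V ≤ n + 1)
    {a b : V} {S : Finset V} (hS : GSep G a b S)
    (hmin : ∀ T : Finset V, GSep G a b T → S.card ≤ T.card) :
    ∃ v, Reach G S a v ∧ Simp G v := by
  classical
  have hclique := sep_clique hG hS hmin
  set sA : Set V := {z | Reach G S a z ∨ z ∈ S} with hsA
  have hbA : b ∉ sA := by
    rintro (h | h)
    · exact hS.2.2 h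
    · exact hS.2.1 h
  have hclosed : ∀ u w, Reach G S a u → G.Adj u w → w ∈ sA := by
    intro u w hu hadj
    by_cases hw : w ∈ S
    · exact Or.inr hw
    · exact Or.inl (hu.adj_extend hadj hw)
  have hcards : Fintype.card ↥sA < Fintype.card V :=
    Fintype.card_lt_of_injective_of_notMem Subtype.val Subtype.val_injective
      (by simpa using hbA)
  have haA : a ∈ sA := Or.inl (Reach.refl hS.1)
  have hreach_of_mem : ∀ z : V, z ∈ sA → z ∉ S → Reach G S a z := by
    rintro z (h | h) hz
    · exact h
    · exact absurd h hz
  rcases IH ↥sA (G.induce sA) (by omega) (hG.induce sA) with hcomp | ⟨x', y', hne', hnadj', hsx', hsy'⟩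
  · refine ⟨a, Reach.refl hS.1, ?_⟩
    intro u w hau haw huw
    have hu : u ∈ sA := hclosed a u (Reach.refl hS.1) hau
    have hw : w ∈ sA := hclosed a w (Reach.refl hS.1) haw
    exact hcomp ⟨u, hu⟩ ⟨w, hw⟩ (fun h => huw (congrArg Subtype.val h))
  · have htrans : ∀ (z : ↥sA), Reach G S a ↑z → Simp (G.induce sA) z → Simp G ↑z := by
      intro z hz hsz u w hzu hzw huw
      have hu : u ∈ sA := hclosed ↑z u hz hzu
      have hw : w ∈ sA := hclosed ↑z w hz hzw
      exact hsz ⟨u, hu⟩ ⟨w, hw⟩ hzu hzw (fun h => huw (congrArg Subtype.val h))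
    by_cases hx'S : (↑x' : V) ∈ S
    · by_cases hy'S : (↑y' : V) ∈ S
      · exact absurd (hclique _ hx'S _ hy'S (fun h => hne' (Subtype.ext h))) hnadj'
      · have hry' : Reach G S a ↑y' := hreach_of_mem _ y'.2 hy'S
        exact ⟨↑y', hry', htrans y' hry' hsy'⟩
    · have hrx' : Reach G S a ↑x' := hreach_of_mem _ x'.2 hx'S
      exact ⟨↑x', hrx', htrans x' hrx' hsx'⟩

lemma dirac : ∀ (n : ℕ) (V : Type) [Fintype V] (G : SimpleGraph V), Fintype.card V ≤ n →
    Chordal G → (∀ x y : V, x ≠ y → G.Adj x y) ∨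
      (∃ x y : V, x ≠ y ∧ ¬ G.Adj x y ∧ Simp G x ∧ Simp G y) := by
  intro n
  induction n with
  | zero =>
    intro V _ G hcard _
    left
    intro x
    have : 0 < Fintype.card V := Fintype.card_pos_iff.mpr ⟨x⟩
    omega
  | succ n ih =>
    intro V _ G hcard hG
    classical
    by_cases hcomp : ∀ x y : V, x ≠ y → G.Adj x y
    · exact Or.inl hcomp
    right
    push_neg at hcomp
    obtain ⟨aa, bb, hab, hnadj⟩ := hcomp
    obtain ⟨S, hSsep, hSmin⟩ := exists_min_nat (GSep G aa bb) Finset.card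
      ⟨Finset.univ \ {aa, bb}, sep_exists hab hnadj⟩
    obtain ⟨va, hva, hvas⟩ := step ih hG hcard hSsep hSmin
    obtain ⟨vb, hvb, hvbs⟩ := step ih hG hcard hSsep.symm (fun T h => hSmin T h.symm)
    refine ⟨va, vb, ?_, ?_, hvas, hvbs⟩
    · rintro rfl
      exact hSsep.2.2 (hva.trans hvb.symm)
    · intro hadj
      exact hSsep.2.2 ((hva.adj_extend hadj hvb.not_mem_right).trans hvb.symm)


lemma exists_peo : ∀ (n : ℕ) (V : Type) [Fintype V] (G : SimpleGraph V), Fintype.card V ≤ n →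
    Chordal G → ∃ r : V ↪ ℕ, ∀ u v w : V, G.Adj u v → G.Adj u w →
      r u < r v → r u < r w → v ≠ w → G.Adj v w := by
  intro n
  induction n with
  | zero =>
    intro V _ G hcard _
    have hV : IsEmpty V := by
      rw [← Fintype.card_eq_zero_iff]
      omega
    exact ⟨⟨fun v => 0, fun v => isEmptyElim v⟩, fun u => isEmptyElim u⟩
  | succ n ih =>
    intro V _ G hcard hG
    classical
    cases isEmpty_or_nonempty V with
    | inl h =>
      exact ⟨⟨fun v => 0, fun v => isEmptyElim v⟩, fun u => isEmptyElim u⟩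
    | inr h =>
      -- get a simplicial vertex
      obtain ⟨v₀, hv₀⟩ : ∃ v₀, Simp G v₀ := by
        rcases dirac (Fintype.card V) V G le_rfl hG with hcomp | ⟨x, y, _, _, hx, _⟩
        · exact ⟨Classical.arbitrary V, fun u w h1 h2 hne => hcomp u w hne⟩
        · exact ⟨x, hx⟩
      set s : Set V := {z | z ≠ v₀} with hs
      have hcards : Fintype.card ↥s < Fintype.card V :=
        Fintype.card_lt_of_injective_of_notMem Subtype.val Subtype.val_injective
          (b := v₀) (by simp [hs])
      obtain ⟨r', hr'⟩ := ih ↥s (G.induce s) (by omega) (hG.induce s)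
      set f : V → ℕ := fun u => if h : u = v₀ then 0 else r' ⟨u, h⟩ + 1 with hf
      have hfv0 : f v₀ = 0 := by simp [hf]
      have hfne : ∀ (z : V) (hz : z ≠ v₀), f z = r' ⟨z, hz⟩ + 1 := by
        intro z hz
        simp [hf, hz]
      have hinj : Function.Injective f := by
        intro u1 u2 h
        by_cases h1 : u1 = v₀ <;> by_cases h2 : u2 = v₀
        · rw [h1, h2]
        · rw [h1, hfv0, hfne u2 h2] at h
          omega
        · rw [h2, hfv0, hfne u1 h1] at h
          omega
        · rw [hfne u1 h1, hfne u2 h2] at h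
          have := r'.injective (by omega : r' ⟨u1, h1⟩ = r' ⟨u2, h2⟩)
          exact congrArg Subtype.val this
      refine ⟨⟨f, hinj⟩, ?_⟩
      intro u v w hadjuv hadjuw h1 h2 hvw
      simp only [Function.Embedding.coeFn_mk] at h1 h2
      by_cases hu : u = v₀
      · subst hu
        exact hv₀ v w hadjuv hadjuw hvw
      · have hv : v ≠ v₀ := by
          intro hv
          rw [hv, hfv0] at h1
          omega
        have hw : w ≠ v₀ := by
          intro hw
          rw [hw, hfv0] at h2
          omega
        have h1' : r' ⟨u, hu⟩ < r' ⟨v, hv⟩ := by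
          rw [hfne u hu, hfne v hv] at h1
          omega
        have h2' : r' ⟨u, hu⟩ < r' ⟨w, hw⟩ := by
          rw [hfne u hu, hfne w hw] at h2
          omega
        exact hr' ⟨u, hu⟩ ⟨v, hv⟩ ⟨w, hw⟩ hadjuv hadjuw h1' h2'
          (fun h => hvw (congrArg Subtype.val h))


end Aux

/-- a finite graph is chordal iff it admits a perfect elimination
ordering, i.e. an injective numbering `r` of the vertices such that the later
neighbours of every vertex form a clique. -/
theorem chordal_iff_exists_perfect_elimination_ordering
    {V : Type} [Fintype V] (G : SimpleGraph V) :
    Chordal G ↔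
      ∃ r : V ↪ ℕ, ∀ u v w : V, G.Adj u v → G.Adj u w →
        r u < r v → r u < r w → v ≠ w → G.Adj v w := by
  constructor
  · intro hG
    exact exists_peo (Fintype.card V) V G le_rfl hG
  · rintro ⟨r, hr⟩
    exact chordal_of_peo r hr
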